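/- Let Cov_Fib[ℓ] denote the length of the shortest cover of the length-ℓ prefix of the infinite Fibonacci word Fib. Then: Cov_Fib[1] = 1, Cov_Fib[2] = 2, Cov_Fib[F_k] = 3 for every odd k ≥ 3, and Cov_Fib[F_k] = 5 for every even k ≥ 4. -/

import Mathlib

section Defs

variable {α : Type*}

/-- `C` occurs in `T` at starting position `i`. -/
def OccursAt (C T : List α) (i : ℕ) : Prop :=
  i + C.length ≤ T.length ∧ (T.drop i).take C.length = C

/-- `C` is a cover of `T`: `C` occurs in `T` and every position of `T`
lies within an occurrence of `C`. -/
def IsCover (C T : List α) : Prop :=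
  (∃ i, OccursAt C T i) ∧
    ∀ q, q < T.length → ∃ i, OccursAt C T i ∧ i ≤ q ∧ q < i + C.length

/-- A border of `T` is both a prefix and a suffix of `T`. -/
def IsBorder (B T : List α) : Prop := B <+: T ∧ B <:+ T

/-- `p` is a period of `U`: `U[i] = U[i+p]` for all `0 ≤ i < |U| - p`. -/
def IsPeriod (p : ℕ) (U : List α) : Prop :=
  0 < p ∧ ∀ i, i + p < U.length → U[i]? = U[i + p]?

/-- `U` is aperiodic: its smallest period `p` satisfies `2p > |U|`
(equivalently, every period `p` of `U` satisfies `2p > |U|`). -/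
def StrAperiodic (U : List α) : Prop := ∀ p, IsPeriod p U → U.length < 2 * p

/-- A nonempty string `X` is primitive if `X = Y^t` implies `t = 1`. -/
def StrPrimitive (X : List α) : Prop :=
  X ≠ [] ∧ ∀ (Y : List α) (t : ℕ), X = (List.replicate t Y).flatten → t = 1

/-- A string is superprimitive if it has no proper cover. -/
def Superprimitive (T : List α) : Prop :=
  ¬ ∃ C : List α, IsCover C T ∧ C.length < T.length

/-- The length of the shortest cover of `T`. -/
noncomputable def covLen (T : List α) : ℕ :=
  sInf {c | ∃ C : List α, C.length = c ∧ IsCover C T}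

/-- `{a, a+p, ..., a+(t-1)p}` is a maximal arithmetic progression with
difference `p` inside the set `S`. -/
def MaxProg (S : Set ℕ) (p a t : ℕ) : Prop :=
  0 < t ∧ (∀ r, r < t → a + r * p ∈ S) ∧ (∀ b, b + p = a → b ∉ S) ∧ a + t * p ∉ S

end Defs

/-- Fibonacci strings over `Bool` (`true` = a, `false` = b):
`Fib_0 = b`, `Fib_1 = a`, `Fib_m = Fib_{m-1} Fib_{m-2}`. -/
def fibWord : ℕ → List Bool
  | 0 => [false]
  | 1 => [true]
  | (m + 2) => fibWord (m + 1) ++ fibWord m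

/-- Fibonacci numbers `F_k = |Fib_k|`: `F_0 = F_1 = 1`, `F_2 = 2`, `F_3 = 3`, ... -/
def F (k : ℕ) : ℕ := (fibWord k).length

/-- The `n`-th letter of the infinite Fibonacci word (each `Fib_m`, `m ≥ 1`,
is a prefix of the infinite word, and `F_{n+2} > n`). -/
def fibInf (n : ℕ) : Bool := (fibWord (n + 2)).getD n false

/-- The length-`ℓ` prefix `Fib[0..ℓ)` of the infinite Fibonacci word. -/
def fibPrefix (ℓ : ℕ) : List Bool := (List.range ℓ).map fibInf

/-- `Cov_Fib[ℓ]`: the length of the shortest cover of `Fib[0..ℓ)`. -/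
noncomputable def covFib (ℓ : ℕ) : ℕ := covLen (fibPrefix ℓ)

/- ===== auxiliary lemmas ===== -/

namespace FibAux

variable {C D T X Y P : List Bool} {i : ℕ}

lemma occ_left (h : OccursAt C X i) : OccursAt C (X ++ Y) i := by
  obtain ⟨h1, h2⟩ := h
  refine ⟨by simpa using le_trans h1 (by simp), ?_⟩
  rw [List.drop_append_of_le_length (by omega),
      List.take_append_of_le_length (by simp [List.length_drop]; omega), h2]

lemma occ_right (h : OccursAt C Y i) : OccursAt C (X ++ Y) (X.length + i) := by
  obtain ⟨h1, h2⟩ := h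
  refine ⟨by simp; omega, ?_⟩
  rw [List.drop_length_add_append, h2]

lemma cover_glue (hX : IsCover C X) (hY : IsCover C Y) : IsCover C (X ++ Y) := by
  obtain ⟨⟨i0, hi0⟩, hcovX⟩ := hX
  obtain ⟨⟨j0, hj0⟩, hcovY⟩ := hY
  refine ⟨⟨i0, occ_left hi0⟩, ?_⟩
  intro q hq
  simp only [List.length_append] at hq
  by_cases hqX : q < X.length
  · obtain ⟨i, hocc, h1, h2⟩ := hcovX q hqX
    exact ⟨i, occ_left hocc, h1, h2⟩
  · obtain ⟨i, hocc, h1, h2⟩ := hcovY (q - X.length) (by omega)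
    exact ⟨X.length + i, occ_right hocc, by omega, by omega⟩

lemma cover_len_le (h : IsCover C T) : C.length ≤ T.length := by
  obtain ⟨⟨i, h1, _⟩, _⟩ := h; omega

lemma cover_pos (h : IsCover C T) (hT : T ≠ []) : 0 < C.length := by
  obtain ⟨_, hcov⟩ := h
  obtain ⟨i, _, h1, h2⟩ := hcov 0 (by cases T <;> simp_all)
  omega

lemma cover_isPrefix (h : IsCover C T) (hT : T ≠ []) : C <+: T := by
  obtain ⟨_, hcov⟩ := h
  obtain ⟨i, ⟨_, heq⟩, h1, _⟩ := hcov 0 (by cases T <;> simp_all)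
  interval_cases i
  rw [List.drop_zero] at heq
  exact heq ▸ List.take_prefix _ _

lemma cover_isSuffix (h : IsCover C T) (hT : T ≠ []) : C <:+ T := by
  obtain ⟨_, hcov⟩ := h
  obtain ⟨i, ⟨hle, heq⟩, h1, h2⟩ := hcov (T.length - 1)
    (by cases T <;> simp_all)
  have hiC : i + C.length = T.length := by
    have : 0 < T.length := by cases T <;> simp_all
    omega
  have : (T.drop i).take C.length = T.drop i := by
    apply List.take_of_length_le; simp [List.length_drop]; omega
  rw [this] at heq
  exact heq ▸ List.drop_suffix _ _

lemma cover_absorb (h : IsCover C X) (hP : P.length ≤ C.length)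
    (h0 : OccursAt C (P ++ X) 0) : IsCover C (P ++ X) := by
  obtain ⟨_, hcov⟩ := h
  refine ⟨⟨0, h0⟩, ?_⟩
  intro q hq
  by_cases hqC : q < C.length
  · exact ⟨0, h0, by omega, by omega⟩
  · simp only [List.length_append] at hq
    obtain ⟨i, hocc, h1, h2⟩ := hcov (q - P.length) (by omega)
    exact ⟨P.length + i, occ_right hocc, by omega, by omega⟩

lemma suffix_eq_of_length {S1 S2 : List Bool} (h1 : S1 <:+ T) (h2 : S2 <:+ T)
    (h : S1.length = S2.length) : S1 = S2 := by
  obtain ⟨u, rfl⟩ := h1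
  obtain ⟨v, hv⟩ := h2
  have hl : v.length = u.length := by
    have := congrArg List.length hv; simp at this; omega
  exact ((List.append_inj hv hl).2).symm

lemma isCover_self (hT : T ≠ []) : IsCover T T := by
  refine ⟨⟨0, by simp [OccursAt]⟩, ?_⟩
  intro q hq
  exact ⟨0, by simp [OccursAt], by omega, by omega⟩

end FibAux

namespace FibAux

lemma fibWord_ne_nil : ∀ k, fibWord k ≠ []
  | 0 => by simp [fibWord]
  | 1 => by simp [fibWord]
  | (m+2) => by simp [fibWord, fibWord_ne_nil (m+1)]

lemma F_pos (k : ℕ) : 0 < F k := by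
  have := fibWord_ne_nil k
  simp only [F, List.length_pos_iff]; exact this

lemma F_add (k : ℕ) : F (k + 2) = F (k + 1) + F k := by
  simp [F, fibWord]

lemma fib_prefix_succ {k : ℕ} (hk : 1 ≤ k) : fibWord k <+: fibWord (k + 1) := by
  obtain ⟨l, rfl⟩ : ∃ l, k = l + 1 := ⟨k - 1, by omega⟩
  show fibWord (l+1) <+: fibWord (l+2)
  rw [show fibWord (l+2) = fibWord (l+1) ++ fibWord l from rfl]
  exact List.prefix_append _ _

lemma fib_prefix_le {i j : ℕ} (h1 : 1 ≤ i) (hij : i ≤ j) :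
    fibWord i <+: fibWord j := by
  induction j with
  | zero => omega
  | succ j IH =>
    rcases Nat.lt_or_ge i (j+1) with h | h
    · exact (IH (by omega)).trans (fib_prefix_succ (by omega))
    · have : i = j + 1 := by omega
      subst this; exact List.prefix_refl _

lemma fib_suffix_two (k : ℕ) : fibWord k <:+ fibWord (k + 2) := by
  rw [show fibWord (k+2) = fibWord (k+1) ++ fibWord k from rfl]
  exact List.suffix_append _ _

lemma suffix_odd : ∀ m, [false, true] <:+ fibWord (2 * m + 3)
  | 0 => by decide
  | (m+1) => by
      have := suffix_odd m
      have h2 := fib_suffix_two (2 * m + 3)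
      rw [show 2 * (m+1) + 3 = 2 * m + 3 + 2 by ring]
      exact this.trans h2

lemma suffix_even : ∀ m, [false, true, true, false] <:+ fibWord (2 * m + 4)
  | 0 => by decide
  | (m+1) => by
      have := suffix_even m
      have h2 := fib_suffix_two (2 * m + 4)
      rw [show 2 * (m+1) + 4 = 2 * m + 4 + 2 by ring]
      exact this.trans h2

lemma lt_F : ∀ n, n < F (n + 2)
  | 0 => by decide
  | 1 => by decide
  | (n+2) => by
      have h1 : n + 1 < F (n + 2 + 1) := by
        have := lt_F (n+1); rwa [show n+1+2 = n+2+1 by omega] at this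
      have h2 := F_pos (n+2)
      have := F_add (n+2)
      omega

lemma fibPrefix_F (k : ℕ) (hk : 1 ≤ k) : fibPrefix (F k) = fibWord k := by
  apply List.ext_getElem
  · simp [fibPrefix, F]
  · intro n h1 h2
    simp only [fibPrefix, List.getElem_map, List.getElem_range]
    have hn : n < F k := by simpa [fibPrefix] using h1
    have hn2 : n < F (n + 2) := lt_F n
    have : (fibWord (n+2)).getD n false = (fibWord k)[n] := by
      rcases Nat.le_total (n + 2) k with h | h
      · rw [List.getD_eq_getElem _ _ (by exact hn2)]
        exact (fib_prefix_le (by omega) h).getElem hn2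
      · rw [List.getD_eq_getElem _ _ (by exact hn2)]
        exact ((fib_prefix_le (by omega) h).getElem hn).symm
    exact this

lemma covLen_eq {T C : List Bool} (h : IsCover C T)
    (hlb : ∀ D : List Bool, IsCover D T → C.length ≤ D.length) :
    covLen T = C.length := by
  have hmem : C.length ∈ {c | ∃ D : List Bool, D.length = c ∧ IsCover D T} :=
    ⟨C, rfl, h⟩
  apply le_antisymm
  · exact Nat.sInf_le hmem
  · apply le_csInf ⟨C.length, hmem⟩
    rintro c ⟨D, rfl, hD⟩
    exact hlb D hD

end FibAux

namespace FibAux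

def aba : List Bool := [true, false, true]
def abaab : List Bool := [true, false, true, true, false]

lemma fibWord3 : fibWord 3 = aba := by decide
lemma fibWord4 : fibWord 4 = abaab := by decide

lemma aba_absorb {X : List Bool} (hX : IsCover aba X) :
    IsCover aba ([true, false] ++ X) := by
  have hpre := cover_isPrefix hX (by rintro rfl; exact absurd (cover_len_le hX) (by decide))
  obtain ⟨r, rfl⟩ := hpre
  apply cover_absorb hX (by decide)
  constructor
  · simp [aba]
  · simp [aba]

lemma abaab_absorb {X : List Bool} (hX : IsCover abaab X) :
    IsCover abaab ([true, false, true] ++ X) := by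
  have hpre := cover_isPrefix hX (by rintro rfl; exact absurd (cover_len_le hX) (by decide))
  obtain ⟨r, rfl⟩ := hpre
  apply cover_absorb hX (by decide)
  constructor
  · simp [abaab]
  · simp [abaab]

lemma aba_main : ∀ n : ℕ,
    (Odd n → 3 ≤ n → IsCover aba (fibWord n)) ∧
    (Even n → 2 ≤ n → ∀ X : List Bool, IsCover aba X → IsCover aba (fibWord n ++ X)) := by
  intro n
  induction n using Nat.strong_induction_on with
  | _ n IH =>
    constructor
    · intro hodd h3
      by_cases hn3 : n = 3
      · subst hn3; rw [fibWord3]; exact isCover_self (by decide)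
      · obtain ⟨m, rfl⟩ : ∃ m, n = m + 2 := ⟨n - 2, by omega⟩
        obtain ⟨t, ht⟩ := hodd
        have hmodd : Odd m := ⟨t - 1, by omega⟩
        have hm3 : 3 ≤ m := by
          rcases hmodd with ⟨s, hs⟩; omega
        have hXcov : IsCover aba (fibWord m) := (IH m (by omega)).1 hmodd hm3
        have heven : Even (m + 1) := by
          rcases hmodd with ⟨s, hs⟩; exact ⟨s + 1, by omega⟩
        have := (IH (m + 1) (by omega)).2 heven (by omega) (fibWord m) hXcov
        exact this
    · intro heven h2 X hX
      by_cases hn2 : n = 2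
      · subst hn2
        have : fibWord 2 = [true, false] := by decide
        rw [this]
        exact aba_absorb hX
      · obtain ⟨m, rfl⟩ : ∃ m, n = m + 2 := ⟨n - 2, by omega⟩
        obtain ⟨t, ht⟩ := heven
        have hmeven : Even m := ⟨t - 1, by omega⟩
        have hm2 : 2 ≤ m := by omega
        have hmodd : Odd (m + 1) := by
          rcases hmeven with ⟨s, hs⟩; exact ⟨s, by omega⟩
        have h1 : IsCover aba (fibWord (m + 1)) := (IH (m + 1) (by omega)).1 hmodd (by omega)
        have h2' : IsCover aba (fibWord m ++ X) := (IH m (by omega)).2 hmeven hm2 X hX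
        have : fibWord (m + 2) ++ X = fibWord (m + 1) ++ (fibWord m ++ X) := by
          rw [show fibWord (m+2) = fibWord (m+1) ++ fibWord m from rfl, List.append_assoc]
        rw [this]
        exact cover_glue h1 h2'

lemma abaab_main : ∀ n : ℕ,
    (Even n → 4 ≤ n → IsCover abaab (fibWord n)) ∧
    (Odd n → 3 ≤ n → ∀ X : List Bool, IsCover abaab X → IsCover abaab (fibWord n ++ X)) := by
  intro n
  induction n using Nat.strong_induction_on with
  | _ n IH =>
    constructor
    · intro heven h4
      by_cases hn4 : n = 4
      · subst hn4; rw [fibWord4]; exact isCover_self (by decide)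
      · obtain ⟨m, rfl⟩ : ∃ m, n = m + 2 := ⟨n - 2, by omega⟩
        obtain ⟨t, ht⟩ := heven
        have hmeven : Even m := ⟨t - 1, by omega⟩
        have hm4 : 4 ≤ m := by
          rcases hmeven with ⟨s, hs⟩; omega
        have hXcov : IsCover abaab (fibWord m) := (IH m (by omega)).1 hmeven hm4
        have hmodd : Odd (m + 1) := by
          rcases hmeven with ⟨s, hs⟩; exact ⟨s, by omega⟩
        exact (IH (m + 1) (by omega)).2 hmodd (by omega) (fibWord m) hXcov
    · intro hodd h3 X hX
      by_cases hn3 : n = 3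
      · subst hn3
        have : fibWord 3 = [true, false, true] := by decide
        rw [this]
        exact abaab_absorb hX
      · obtain ⟨m, rfl⟩ : ∃ m, n = m + 2 := ⟨n - 2, by omega⟩
        obtain ⟨t, ht⟩ := hodd
        have hmodd : Odd m := ⟨t - 1, by omega⟩
        have hm3 : 3 ≤ m := by
          rcases hmodd with ⟨s, hs⟩; omega
        have hmeven : Even (m + 1) := by
          rcases hmodd with ⟨s, hs⟩; exact ⟨s + 1, by omega⟩
        have h1 : IsCover abaab (fibWord (m + 1)) := (IH (m + 1) (by omega)).1 hmeven (by omega)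
        have h2' : IsCover abaab (fibWord m ++ X) := (IH m (by omega)).2 hmodd hm3 X hX
        have : fibWord (m + 2) ++ X = fibWord (m + 1) ++ (fibWord m ++ X) := by
          rw [show fibWord (m+2) = fibWord (m+1) ++ fibWord m from rfl, List.append_assoc]
        rw [this]
        exact cover_glue h1 h2'

end FibAux

namespace FibAux

lemma lb_odd {k : ℕ} (hk : 3 ≤ k) (hodd : Odd k) :
    ∀ D : List Bool, IsCover D (fibWord k) → 3 ≤ D.length := by
  intro D hD
  obtain ⟨rest, hT⟩ : ∃ rest, fibWord k = [true, false, true] ++ rest := by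
    obtain ⟨r, hr⟩ := fib_prefix_le (i := 3) (by omega) hk
    exact ⟨r, by rw [← hr]; rfl⟩
  have hsfx : [false, true] <:+ fibWord k := by
    obtain ⟨t, ht⟩ := hodd
    have := suffix_odd (t - 1)
    rwa [show 2 * (t - 1) + 3 = k by omega] at this
  have hne : fibWord k ≠ [] := fibWord_ne_nil k
  have hpos := cover_pos hD hne
  have hDp := cover_isPrefix hD hne
  have hDs := cover_isSuffix hD hne
  by_contra hcon
  have hcase : D.length = 1 ∨ D.length = 2 := by omega
  have hlen : 3 ≤ (fibWord k).length := by rw [hT]; simp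
  rcases hcase with h1 | h2
  · have hDval : D = [true] := by
      rw [List.prefix_iff_eq_take] at hDp
      rw [hDp, h1, hT]; rfl
    obtain ⟨_, hcov⟩ := hD
    obtain ⟨i, ⟨_, heq⟩, hle, hlt⟩ := hcov 1 (by omega)
    have hi : i = 1 := by rw [hDval] at hlt; simp at hlt; omega
    rw [hi, hDval, hT] at heq
    simp at heq
  · have hDval : D = [true, false] := by
      rw [List.prefix_iff_eq_take] at hDp
      rw [hDp, h2, hT]; rfl
    have := suffix_eq_of_length hDs hsfx (by rw [hDval]; rfl)
    rw [hDval] at this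
    simp at this

lemma lb_even {k : ℕ} (hk : 4 ≤ k) (heven : Even k) :
    ∀ D : List Bool, IsCover D (fibWord k) → 5 ≤ D.length := by
  intro D hD
  obtain ⟨rest, hT⟩ : ∃ rest, fibWord k = [true, false, true, true, false] ++ rest := by
    obtain ⟨r, hr⟩ := fib_prefix_le (i := 4) (by omega) hk
    exact ⟨r, by rw [← hr]; rfl⟩
  have hsfx : [false, true, true, false] <:+ fibWord k := by
    obtain ⟨t, ht⟩ := heven
    have := suffix_even (t - 2)
    rwa [show 2 * (t - 2) + 4 = k by omega] at this
  have hne : fibWord k ≠ [] := fibWord_ne_nil k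
  have hpos := cover_pos hD hne
  have hDp := cover_isPrefix hD hne
  have hDs := cover_isSuffix hD hne
  by_contra hcon
  have hlen : 5 ≤ (fibWord k).length := by rw [hT]; simp
  rw [List.prefix_iff_eq_take] at hDp
  have hcase : D.length = 1 ∨ D.length = 2 ∨ D.length = 3 ∨ D.length = 4 := by omega
  rcases hcase with h | h | h | h
  · have hDval : D = [true] := by rw [hDp, h, hT]; rfl
    obtain ⟨_, hcov⟩ := hD
    obtain ⟨i, ⟨_, heq⟩, hle, hlt⟩ := hcov 1 (by omega)
    have hi : i = 1 := by rw [hDval] at hlt; simp at hlt; omega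
    rw [hi, hDval, hT] at heq
    simp at heq
  · have hDval : D = [true, false] := by rw [hDp, h, hT]; rfl
    obtain ⟨_, hcov⟩ := hD
    obtain ⟨i, ⟨_, heq⟩, hle, hlt⟩ := hcov 2 (by omega)
    have hi : i = 1 ∨ i = 2 := by rw [hDval] at hlt; simp at hlt; omega
    rcases hi with hi | hi <;> rw [hi, hDval, hT] at heq <;> simp at heq
  · have hDval : D = [true, false, true] := by rw [hDp, h, hT]; rfl
    have hsfx3 : [true, true, false] <:+ fibWord k :=
      (List.suffix_cons false [true, true, false]).trans hsfx
    have := suffix_eq_of_length hDs hsfx3 (by rw [hDval]; rfl)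
    rw [hDval] at this
    simp at this
  · have hDval : D = [true, false, true, true] := by rw [hDp, h, hT]; rfl
    have := suffix_eq_of_length hDs hsfx (by rw [hDval]; rfl)
    rw [hDval] at this
    simp at this

end FibAux

/-- `Cov_Fib[1] = 1`, `Cov_Fib[2] = 2`, `Cov_Fib[F_k] = 3` for odd `k ≥ 3`,
and `Cov_Fib[F_k] = 5` for even `k ≥ 4`. -/
theorem stmt6 :
    covFib 1 = 1 ∧ covFib 2 = 2 ∧
    (∀ k, 3 ≤ k → Odd k → covFib (F k) = 3) ∧
    (∀ k, 4 ≤ k → Even k → covFib (F k) = 5) := by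
  refine ⟨?_, ?_, ?_, ?_⟩
  · have h1 : fibPrefix 1 = [true] := by decide
    rw [covFib, h1]
    have := FibAux.covLen_eq (T := [true]) (C := [true])
      (FibAux.isCover_self (by decide))
      (fun D hD => FibAux.cover_pos hD (by decide))
    simpa using this
  · have h2 : fibPrefix 2 = [true, false] := by decide
    rw [covFib, h2]
    have hlb : ∀ D : List Bool, IsCover D [true, false] → 2 ≤ D.length := by
      intro D hD
      have hpos := FibAux.cover_pos hD (by decide)
      have hDp := FibAux.cover_isPrefix hD (by decide)
      have hDs := FibAux.cover_isSuffix hD (by decide)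
      by_contra hcon
      have h1 : D.length = 1 := by omega
      rw [List.prefix_iff_eq_take] at hDp
      have hDval : D = [true] := by rw [hDp, h1]; rfl
      have hsfx : [false] <:+ [true, false] := by decide
      have := FibAux.suffix_eq_of_length hDs hsfx (by rw [hDval]; rfl)
      rw [hDval] at this; simp at this
    have := FibAux.covLen_eq
      (FibAux.isCover_self (T := [true, false]) (by decide)) hlb
    simpa using this
  · intro k hk hodd
    rw [covFib, FibAux.fibPrefix_F k (by omega)]
    have := FibAux.covLen_eq ((FibAux.aba_main k).1 hodd hk) (FibAux.lb_odd hk hodd)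
    simpa [FibAux.aba] using this
  · intro k hk heven
    rw [covFib, FibAux.fibPrefix_F k (by omega)]
    have := FibAux.covLen_eq ((FibAux.abaab_main k).1 heven hk) (FibAux.lb_even hk heven)
    simpa [FibAux.abaab] using this
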